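/- Let $(A,\circ_A,\frak{B},\omega)$ be a quadratic commutative associative algebra $(A,*_A,\frak{B})$ equipped with a nondegenerate Connes cocycle $\omega$, and define $D:A\to A$ by $\omega(x,y)=\frak{B}(Dx,y)$. Then $D$ is a skew-symmetric (with respect to $\frak{B}$) invertible derivation of $(A,*_A)$, and its inverse $P=D^{-1}$ is a Rota-Baxter operator of weight $0$ on $(A,*_A)$. -/
import Mathlib


/-- Let `(A, *, 𝔅)` be a quadratic commutative associative algebra equipped with a
nondegenerate Connes cocycle `ω`, and define `D : A → A` by `ω(x, y) = 𝔅(Dx, y)`.  Then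
`D` is a skew-symmetric (with respect to `𝔅`) invertible derivation of `(A, *)` and its
inverse `P = D⁻¹` is a Rota-Baxter operator of weight `0` on `(A, *)`. -/
theorem connes_cocycle_derivation_rb {K : Type*} [Field K] {A : Type*}
    [AddCommGroup A] [Module K A] [FiniteDimensional K A]
    (smul : A →ₗ[K] A →ₗ[K] A)
    (hcomm : ∀ x y : A, smul x y = smul y x)
    (hassoc : ∀ x y z : A, smul (smul x y) z = smul x (smul y z))
    (B : A →ₗ[K] A →ₗ[K] K)
    (hBsymm : ∀ x y : A, B x y = B y x)
    (hBnd : ∀ x : A, (∀ y : A, B x y = 0) → x = 0)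
    (hBinv : ∀ x y z : A, B (smul x y) z = B x (smul y z))
    (ω : A →ₗ[K] A →ₗ[K] K)
    (hskew : ∀ x y : A, ω x y = -ω y x)
    (hnd : ∀ x : A, (∀ y : A, ω x y = 0) → x = 0)
    (hcc : ∀ x y z : A, ω (smul x y) z + ω (smul y z) x + ω (smul z x) y = 0)
    (D : A →ₗ[K] A)
    (hD : ∀ x y : A, ω x y = B (D x) y) :
    (∀ x y : A, D (smul x y) = smul (D x) y + smul x (D y)) ∧
    (∀ x y : A, B (D x) y = -B x (D y)) ∧
    Function.Bijective D ∧
    (∀ P : A →ₗ[K] A, (∀ x : A, P (D x) = x) → (∀ x : A, D (P x) = x) →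
      ∀ x y : A, smul (P x) (P y) = P (smul (P x) y + smul x (P y))) := by
  have hder : ∀ x y : A, D (smul x y) = smul (D x) y + smul x (D y) := by
    intro x y
    have key : ∀ z : A, B (D (smul x y) - (smul (D x) y + smul x (D y))) z = 0 := by
      intro z
      have h1 : B (smul (D x) y) z = ω x (smul y z) := by
        rw [hBinv]; exact (hD x (smul y z)).symm
      have h2 : B (smul x (D y)) z = ω y (smul x z) := by
        rw [hcomm x (D y), hBinv]; exact (hD y (smul x z)).symm
      have hc := hcc x y z
      have e1 : ω x (smul y z) = -ω (smul y z) x := hskew _ _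
      have e2 : ω y (smul x z) = -ω (smul z x) y := by rw [hcomm x z]; exact hskew _ _
      have e3 : ω (smul x y) z = B (D (smul x y)) z := hD _ _
      simp only [map_sub, map_add, LinearMap.sub_apply, LinearMap.add_apply, h1, h2, e1, e2]
      linear_combination hc - e3
    have hz := hBnd _ key
    exact sub_eq_zero.mp hz
  have hskewD : ∀ x y : A, B (D x) y = -B x (D y) := by
    intro x y
    rw [← hD, hskew, hD, hBsymm]
  have hinj : Function.Injective D := by
    rw [← LinearMap.ker_eq_bot, LinearMap.ker_eq_bot']
    intro m hm
    apply hnd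
    intro y
    rw [hD, hm, LinearMap.map_zero, LinearMap.zero_apply]
  refine ⟨hder, hskewD, ⟨hinj, (LinearMap.injective_iff_surjective).mp hinj⟩, ?_⟩
  intro P hPD hDP x y
  have h1 : smul (P x) y + smul x (P y) = D (smul (P x) (P y)) := by
    rw [hder (P x) (P y), hDP, hDP, add_comm]
  rw [h1, hPD]
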